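/- Let G be a countable group, L : G → ℝ≥0 a length function, and let f, f₂ : ℝ≥0 → ℝ≥0 be nondecreasing functions with f(2t) ≤ f₂(t) for all t ≥ 0. Suppose λ, μ : G → ℂ satisfy: Σ|λ(g)| < ∞, Σ|μ(g)| < ∞, Σ|λ(g)| f₂(L(g)) < ∞ and Σ|μ(g)| f₂(L(g)) < ∞. Then for every g ∈ G the convolution (λ*μ)(g) := Σ_{a∈G} λ(a) μ(a⁻¹g) converges absolutely, and Σ_{g∈G} |(λ*μ)(g)| f(L(g)) ≤ (Σ|λ(g)|)·(Σ|μ(g)| f₂(L(g))) + (Σ|λ(g)| f₂(L(g)))·(Σ|μ(g)|) < ∞. In particular the weighted ℓ¹-space determined by a bounding class is closed under convolution. (Proposition 1.2.3(viii) and its proof.) -/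

import Mathlib

open NNReal
set_option maxHeartbeats 1000000 in

/-- **Proposition 1.2.3(viii).** The weighted ℓ¹-space of a group with length function is
closed under convolution: if `f(2t) ≤ f₂(t)` and `lam, mu` are ℓ¹ and `f₂`-weighted ℓ¹,
then the convolution `lam * mu` converges absolutely pointwise and its `f`-weighted
ℓ¹-norm is bounded by `‖lam‖₁ ‖mu‖_{f₂} + ‖lam‖_{f₂} ‖mu‖₁`. -/
theorem stmt_3 {G : Type*} [Group G] [Countable G]
    (L : G → ℝ≥0) (hL1 : L 1 = 0) (hLinv : ∀ g : G, L g⁻¹ = L g)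
    (hLmul : ∀ g h : G, L (g * h) ≤ L g + L h)
    (f f₂ : ℝ≥0 → ℝ≥0) (hf : Monotone f) (hf₂ : Monotone f₂)
    (hff₂ : ∀ t : ℝ≥0, f (2 * t) ≤ f₂ t)
    (lam mu : G → ℂ)
    (hlam1 : Summable fun g => ‖lam g‖)
    (hmu1 : Summable fun g => ‖mu g‖)
    (hlamf : Summable fun g => ‖lam g‖ * (f₂ (L g) : ℝ))
    (hmuf : Summable fun g => ‖mu g‖ * (f₂ (L g) : ℝ)) :
    (∀ g : G, Summable fun a : G => ‖lam a * mu (a⁻¹ * g)‖) ∧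
    (Summable fun g : G =>
      ‖∑' a : G, lam a * mu (a⁻¹ * g)‖ * (f (L g) : ℝ)) ∧
    ∑' g : G, ‖∑' a : G, lam a * mu (a⁻¹ * g)‖ * (f (L g) : ℝ) ≤
      (∑' g : G, ‖lam g‖) *
        (∑' g : G, ‖mu g‖ * (f₂ (L g) : ℝ)) +
      (∑' g : G, ‖lam g‖ * (f₂ (L g) : ℝ)) *
        (∑' g : G, ‖mu g‖) := by
  -- key inequality
  have key : ∀ a g : G, (f (L g) : ℝ) ≤ (f₂ (L a) : ℝ) + (f₂ (L (a⁻¹ * g)) : ℝ) := by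
    intro a g
    have h1 : L g ≤ L a + L (a⁻¹ * g) := by
      have := hLmul a (a⁻¹ * g); simpa using this
    have h2 : L a + L (a⁻¹ * g) ≤ 2 * max (L a) (L (a⁻¹ * g)) := by
      rw [two_mul]
      exact add_le_add (le_max_left _ _) (le_max_right _ _)
    have h3 : f (L g) ≤ f₂ (max (L a) (L (a⁻¹ * g))) :=
      le_trans (hf (h1.trans h2)) (hff₂ _)
    have h4 : f₂ (max (L a) (L (a⁻¹ * g))) ≤ f₂ (L a) + f₂ (L (a⁻¹ * g)) := by
      rcases max_cases (L a) (L (a⁻¹ * g)) with ⟨h, _⟩ | ⟨h, _⟩ <;> rw [h]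
      · exact le_self_add
      · exact le_add_self
    exact_mod_cast h3.trans h4
  -- pointwise summability
  have hmub : ∀ b, ‖mu b‖ ≤ ∑' g, ‖mu g‖ := fun b =>
    Summable.le_tsum hmu1 b fun _ _ => norm_nonneg _
  have hpt : ∀ g : G, Summable fun a : G => ‖lam a * mu (a⁻¹ * g)‖ := by
    intro g
    refine Summable.of_nonneg_of_le (fun a => norm_nonneg _) ?_
      (hlam1.mul_right (∑' g, ‖mu g‖))
    intro a
    rw [norm_mul]
    exact mul_le_mul_of_nonneg_left (hmub _) (norm_nonneg _)
  -- the change of variables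
  let e : G × G ≃ G × G :=
    { toFun := fun p => (p.2, p.2⁻¹ * p.1)
      invFun := fun p => (p.1 * p.2, p.1)
      left_inv := fun p => by simp
      right_inv := fun p => by simp }
  set H1 : G × G → ℝ := fun p => (‖lam p.1‖ * (f₂ (L p.1) : ℝ)) * ‖mu p.2‖
    with hH1
  set H2 : G × G → ℝ := fun p => ‖lam p.1‖ * (‖mu p.2‖ * (f₂ (L p.2) : ℝ))
    with hH2
  have hH1s : Summable H1 := hlamf.mul_of_nonneg hmu1
    (fun x => mul_nonneg (norm_nonneg _) (f₂ (L x)).2) (fun x => norm_nonneg _)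
  have hH2s : Summable H2 := hlam1.mul_of_nonneg hmuf
    (fun x => norm_nonneg _) (fun x => mul_nonneg (norm_nonneg _) (f₂ (L x)).2)
  set M : G × G → ℝ := fun p => H1 (e p) + H2 (e p) with hM
  have hMs : Summable M := ((e.summable_iff.2 hH1s).add (e.summable_iff.2 hH2s))
  set F : G × G → ℝ := fun p => ‖lam p.2 * mu (p.2⁻¹ * p.1)‖ * (f (L p.1) : ℝ)
    with hFdef
  have hFnn : ∀ p, 0 ≤ F p := fun p => mul_nonneg (norm_nonneg _) (f (L p.1)).2
  have hFle : ∀ p, F p ≤ M p := by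
    rintro ⟨g, a⟩
    have : ‖lam a * mu (a⁻¹ * g)‖ * (f (L g) : ℝ) ≤
        ‖lam a * mu (a⁻¹ * g)‖ * ((f₂ (L a) : ℝ) + (f₂ (L (a⁻¹ * g)) : ℝ)) :=
      mul_le_mul_of_nonneg_left (key a g) (norm_nonneg _)
    refine this.trans (le_of_eq ?_)
    simp only [hM, hH1, hH2, e, Equiv.coe_fn_mk, norm_mul]
    ring
  have hFs : Summable F := Summable.of_nonneg_of_le hFnn hFle hMs
  obtain ⟨hFfib, hFsum⟩ := (summable_prod_of_nonneg hFnn).1 hFs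
  -- the convolution bound pointwise
  have hconv : ∀ g : G, ‖∑' a : G, lam a * mu (a⁻¹ * g)‖ * (f (L g) : ℝ) ≤
      ∑' a : G, F (g, a) := by
    intro g
    have h1 : ‖∑' a : G, lam a * mu (a⁻¹ * g)‖ ≤
        ∑' a : G, ‖lam a * mu (a⁻¹ * g)‖ := by
      exact
        norm_tsum_le_tsum_norm (f := fun a : G => lam a * mu (a⁻¹ * g))
          (by exact hpt g)
    calc ‖∑' a : G, lam a * mu (a⁻¹ * g)‖ * (f (L g) : ℝ)
        ≤ (∑' a : G, ‖lam a * mu (a⁻¹ * g)‖) * (f (L g) : ℝ) :=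
          mul_le_mul_of_nonneg_right h1 (f (L g)).2
      _ = ∑' a : G, F (g, a) := (_root_.tsum_mul_right).symm
  have hS : Summable fun g : G =>
      ‖∑' a : G, lam a * mu (a⁻¹ * g)‖ * (f (L g) : ℝ) :=
    Summable.of_nonneg_of_le (fun g => mul_nonneg (norm_nonneg _) (f (L g)).2)
      hconv hFsum
  refine ⟨hpt, hS, ?_⟩
  have step1 : ∑' g : G, ‖∑' a : G, lam a * mu (a⁻¹ * g)‖ * (f (L g) : ℝ) ≤
      ∑' g : G, ∑' a : G, F (g, a) := Summable.tsum_le_tsum hconv hS hFsum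
  have step2 : ∑' g : G, ∑' a : G, F (g, a) = ∑' p : G × G, F p := (Summable.tsum_prod' hFs hFfib).symm
  have step3 : ∑' p : G × G, F p ≤ ∑' p : G × G, M p := Summable.tsum_le_tsum hFle hFs hMs
  have hA : Summable fun p : G × G => H1 (e p) := e.summable_iff.2 hH1s
  have hB : Summable fun p : G × G => H2 (e p) := e.summable_iff.2 hH2s
  have step4 : ∑' p : G × G, M p =
      (∑' p : G × G, H1 p) + (∑' p : G × G, H2 p) := by
    simp only [hM]
    rw [Summable.tsum_add hA hB, e.tsum_eq H1, e.tsum_eq H2]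
  have hprod1 : ∑' p : G × G, H1 p =
      (∑' g : G, ‖lam g‖ * (f₂ (L g) : ℝ)) * (∑' g : G, ‖mu g‖) := by
    rw [hH1]
    have h1 : Summable fun x : G => ‖‖lam x‖ * (f₂ (L x) : ℝ)‖ :=
      hlamf.congr fun x => (Real.norm_of_nonneg
        (mul_nonneg (norm_nonneg _) (f₂ (L x)).2)).symm
    have h2 : Summable fun x : G => ‖‖mu x‖‖ :=
      hmu1.congr fun x => (Real.norm_of_nonneg (norm_nonneg _)).symm
    exact (tsum_mul_tsum_of_summable_norm h1 h2).symm
  have hprod2 : ∑' p : G × G, H2 p =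
      (∑' g : G, ‖lam g‖) * (∑' g : G, ‖mu g‖ * (f₂ (L g) : ℝ)) := by
    rw [hH2]
    have h1 : Summable fun x : G => ‖‖lam x‖‖ :=
      hlam1.congr fun x => (Real.norm_of_nonneg (norm_nonneg _)).symm
    have h2 : Summable fun x : G => ‖‖mu x‖ * (f₂ (L x) : ℝ)‖ :=
      hmuf.congr fun x => (Real.norm_of_nonneg
        (mul_nonneg (norm_nonneg _) (f₂ (L x)).2)).symm
    exact (tsum_mul_tsum_of_summable_norm h1 h2).symm
  calc ∑' g : G, ‖∑' a : G, lam a * mu (a⁻¹ * g)‖ * (f (L g) : ℝ)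
      ≤ ∑' p : G × G, M p := by rw [← step2] at step3; exact step1.trans step3
    _ = _ := by rw [step4, hprod1, hprod2]; ring
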